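/- Let V be a module over a commutative ring with a ℤ/2-grading, and let T ∈ Λᵏ(V) be an even multivector written as T = T^{a₁...a_k} e_{a₁} ⊗ ... ⊗ e_{a_k} with super-antisymmetric coefficients, where e_a is a homogeneous basis. If T = u₁ ∧ ... ∧ u_k for even vectors u₁,...,u_k, then w ∧ T = 0 for every w in the span L_T of the vectors T(p¹,...,p^{k-1},−) obtained by contracting T with k−1 covectors. -/

import Mathlib

lemma aux_mem_prod_zero
    {R : Type} [CommRing R] {V : Type} [AddCommGroup V] [Module R V]
    {E : Type} [Ring E] [Algebra R E]
    (V₀ : Submodule R V)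
    (ι : V →ₗ[R] E)
    (hsq : ∀ v ∈ V₀, ι v * ι v = 0)
    (hanti : ∀ v ∈ V₀, ∀ w ∈ V₀, ι v * ι w = -(ι w * ι v))
    (l : List V) (hl : ∀ x ∈ l, x ∈ V₀)
    (v : V) (hv : v ∈ l) :
    ι v * (l.map ι).prod = 0 := by
  induction l with
  | nil => simp at hv
  | cons x l ih =>
    have hx : x ∈ V₀ := hl x List.mem_cons_self
    have hv₀ : v ∈ V₀ := hl v hv
    rcases List.mem_cons.mp hv with rfl | hv'
    · simp only [List.map_cons, List.prod_cons, ← mul_assoc, hsq v hv₀, zero_mul]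
    · have : ι v * ι x = -(ι x * ι v) := hanti v hv₀ x hx
      rw [List.map_cons, List.prod_cons, ← mul_assoc, this, neg_mul, mul_assoc,
        ih (fun y hy => hl y (List.mem_cons_of_mem _ hy)) hv', mul_zero, neg_zero]

/- STATEMENT 11: abstract super Plücker criterion, 'only if' direction.
In the (super) exterior algebra E of a supermodule V (encoded by a linear map
ι : V → E with ι v * ι v = 0 and anticommutativity for *even* vectors v, w ∈ V₀),
if T = u₁ ∧ ... ∧ u_k is a simple multivector with all u_i even, then
w ∧ T = 0 for every w in the associated space L_T, which for simple T is the
span of u₁, ..., u_k. -/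
theorem simple_multivector_wedge_associated_space_zero
    {R : Type} [CommRing R] {V : Type} [AddCommGroup V] [Module R V]
    {E : Type} [Ring E] [Algebra R E]
    (V₀ : Submodule R V)  -- the even part of V
    (ι : V →ₗ[R] E)
    (hsq : ∀ v ∈ V₀, ι v * ι v = 0)
    (hanti : ∀ v ∈ V₀, ∀ w ∈ V₀, ι v * ι w = -(ι w * ι v))
    {k : ℕ} (u : Fin k → V) (hu : ∀ i, u i ∈ V₀)
    (T : E) (hT : T = (List.ofFn fun i => ι (u i)).prod)
    (w : V) (hw : w ∈ Submodule.span R (Set.range u)) :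
    ι w * T = 0 := by
  have hT' : T = ((List.ofFn u).map ι).prod := by
    rw [hT, List.map_ofFn]; rfl
  have key : ∀ i, ι (u i) * T = 0 := by
    intro i
    rw [hT']
    exact aux_mem_prod_zero V₀ ι hsq hanti (List.ofFn u)
      (fun x hx => by obtain ⟨j, rfl⟩ := List.mem_ofFn.mp hx; exact hu j)
      (u i) (List.mem_ofFn.mpr ⟨i, rfl⟩)
  induction hw using Submodule.span_induction with
  | mem x hx => obtain ⟨i, rfl⟩ := hx; exact key i
  | zero => simp
  | add x y _ _ hx hy => rw [map_add, add_mul, hx, hy, add_zero]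
  | smul r x _ hx => rw [map_smul, smul_mul_assoc, hx, smul_zero]
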